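/- (Quadratic case) Assume in addition that t_j = s_j + 2 for every 1 ≤ j ≤ m. Then for all integers p, q with 0 ≤ q ≤ p ≤ n: there exists an index i with 0 ≤ i ≤ l_p and a_i^{(p)} = q if and only if every integer r with q ≤ r ≤ p − 2 belongs to S; and when this is the case, the (unique) such index is i = p − q. In particular, in the quadratic case a_i^{(p)} = p − i for every 0 ≤ i ≤ l_p. -/
import Mathlib


/-- `d(p) = max { s j : t j ≤ p }`, with `⊥` meaning "undefined" (i.e. `-∞`). -/
noncomputable def dvalue (m : ℕ) (s t : ℕ → ℤ) (p : ℤ) : WithBot ℤ :=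
  ((Finset.range m).filter (fun j => t j ≤ p)).sup (fun j => (s j : WithBot ℤ))

/-- `d†(p) = min { t j : s j ≥ p }`, with `⊤` meaning "undefined" (i.e. `+∞`). -/
noncomputable def ddual (m : ℕ) (s t : ℕ → ℤ) (p : ℤ) : WithTop ℤ :=
  ((Finset.range m).filter (fun j => p ≤ s j)).inf (fun j => (t j : WithTop ℤ))

/-- The extension of `d` to `WithBot ℤ`, sending `⊥` to `⊥`. -/
noncomputable def dW (m : ℕ) (s t : ℕ → ℤ) : WithBot ℤ → WithBot ℤ :=
  WithBot.recBotCoe ⊥ (dvalue m s t)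

/-- The extension of `d†` to `WithTop ℤ`, sending `⊤` to `⊤`. -/
noncomputable def dtW (m : ℕ) (s t : ℕ → ℤ) : WithTop ℤ → WithTop ℤ :=
  WithTop.recTopCoe ⊤ (ddual m s t)

/-- The (total extension of the) sequence `a_i^{(p)}`:
`a_0 = p`, `a_1 = p - 1`, `a_{i+2} = d(a_i)`.  For `i ≤ l_p` this agrees with the
sequence of the paper. -/
noncomputable def aSeq (m : ℕ) (s t : ℕ → ℤ) (p : ℤ) : ℕ → WithBot ℤ
  | 0 => (p : WithBot ℤ)
  | 1 => ((p - 1 : ℤ) : WithBot ℤ)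
  | i + 2 => dW m s t (aSeq m s t p i)

/-- The length `l_p`: `l_0 = 0`, and for `p ≠ 0` it is the least `j ≥ 1` with
`d(a_{j-1}^{(p)}) = d(a_j^{(p)})` (undefined values compared as `⊥`). -/
noncomputable def lSeq (m : ℕ) (s t : ℕ → ℤ) (p : ℤ) : ℕ :=
  if p = 0 then 0
  else sInf {j : ℕ | 1 ≤ j ∧ dW m s t (aSeq m s t p (j - 1)) = dW m s t (aSeq m s t p j)}

/-- The (total extension of the) dual sequence `a_i^{(p)†}`:
`a_0 = p`, `a_1 = p + 1`, `a_{i+2} = d†(a_i)`. -/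
noncomputable def aSeqD (m : ℕ) (s t : ℕ → ℤ) (p : ℤ) : ℕ → WithTop ℤ
  | 0 => (p : WithTop ℤ)
  | 1 => ((p + 1 : ℤ) : WithTop ℤ)
  | i + 2 => dtW m s t (aSeqD m s t p i)

/-- The dual length `l_p†`: `l_n† = 0`, and for `p ≠ n` it is the least `j ≥ 1` with
`d†(a_{j-1}^{(p)†}) = d†(a_j^{(p)†})` (undefined values compared as `⊤`). -/
noncomputable def lSeqD (n : ℤ) (m : ℕ) (s t : ℕ → ℤ) (p : ℤ) : ℕ :=
  if p = n then 0
  else sInf {j : ℕ | 1 ≤ j ∧ dtW m s t (aSeqD m s t p (j - 1)) = dtW m s t (aSeqD m s t p j)}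


section QuadraticAux
variable (m : ℕ) (s t : ℕ → ℤ)

lemma dW_coe (x : ℤ) : dW m s t (x : WithBot ℤ) = dvalue m s t x := rfl

lemma aSeq_zero (p : ℤ) : aSeq m s t p 0 = (p : WithBot ℤ) := rfl
lemma aSeq_one (p : ℤ) : aSeq m s t p 1 = ((p - 1 : ℤ) : WithBot ℤ) := rfl
lemma aSeq_succ (p : ℤ) (i : ℕ) : aSeq m s t p (i+2) = dW m s t (aSeq m s t p i) := rfl

variable (hquad : ∀ j : ℕ, j < m → t j = s j + 2)

include hquad in
lemma dvalue_le (x : ℤ) : dvalue m s t x ≤ ((x - 2 : ℤ) : WithBot ℤ) := by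
  apply Finset.sup_le
  intro j hj
  simp only [Finset.mem_filter, Finset.mem_range] at hj
  have h1 := hquad j hj.1
  have : s j ≤ x - 2 := by omega
  exact WithBot.coe_le_coe.mpr this

include hquad in
lemma dvalue_eq_of_mem (x : ℤ) (j0 : ℕ) (hj0 : j0 < m) (hs : s j0 = x - 2) :
    dvalue m s t x = ((x - 2 : ℤ) : WithBot ℤ) := by
  refine le_antisymm (dvalue_le m s t hquad x) ?_
  have hmem : j0 ∈ (Finset.range m).filter (fun j => t j ≤ x) := by
    simp only [Finset.mem_filter, Finset.mem_range]
    refine ⟨hj0, ?_⟩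
    rw [hquad j0 hj0, hs]; omega
  calc ((x - 2 : ℤ) : WithBot ℤ) = ((s j0 : ℤ) : WithBot ℤ) := by rw [hs]
    _ ≤ _ := Finset.le_sup (f := fun j => (s j : WithBot ℤ)) hmem

include hquad in
lemma dvalue_eq_of_notMem (x : ℤ) (h : ¬ ∃ k, k < m ∧ s k = x - 2) :
    dvalue m s t x = dvalue m s t (x - 1) := by
  unfold dvalue
  congr 1
  ext j
  simp only [Finset.mem_filter, Finset.mem_range, and_congr_right_iff]
  intro hj
  have h1 := hquad j hj
  have h2 : s j ≠ x - 2 := fun hc => h ⟨j, hj, hc⟩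
  omega

include hquad in
lemma aSeq_eq_of (p : ℤ) :
    ∀ i : ℕ, (∀ j : ℕ, 2 ≤ j → j ≤ i → ∃ k, k < m ∧ s k = p - j) →
    aSeq m s t p i = ((p - i : ℤ) : WithBot ℤ) := by
  intro i
  induction i using Nat.strong_induction_on with
  | _ i ih =>
    match i with
    | 0 => intro _; simp [aSeq_zero]
    | 1 => intro _; rw [aSeq_one]; norm_num
    | (i+2) =>
      intro h
      rw [aSeq_succ, ih i (by omega) (fun j h2 hji => h j h2 (by omega)), dW_coe]
      obtain ⟨k, hk, hsk⟩ := h (i+2) (by omega) le_rfl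
      rw [dvalue_eq_of_mem m s t hquad (p - i) k hk (by push_cast at hsk ⊢; omega)]
      congr 1; push_cast; ring

variable (hs0 : ∀ j : ℕ, j < m → 0 ≤ s j)

include hquad hs0 in
lemma quadratic_key (p : ℤ) (hp : 0 ≤ p) :
    ∃ M : ℕ, 1 ≤ M ∧
      (∀ j : ℕ, 1 ≤ j → j < M → ∃ k, k < m ∧ s k = p - j - 1) ∧
      (¬ ∃ k, k < m ∧ s k = p - M - 1) ∧
      (∀ i : ℕ, i ≤ M → aSeq m s t p i = ((p - i : ℤ) : WithBot ℤ)) ∧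
      (p ≠ 0 → lSeq m s t p = M) := by
  set V : Set ℕ := {j : ℕ | 1 ≤ j ∧ ¬∃ k, k < m ∧ s k = p - (j : ℤ) - 1} with hV
  have hne : V.Nonempty := by
    refine ⟨p.toNat + 1, ⟨by omega, ?_⟩⟩
    rintro ⟨k, hk, hsk⟩
    have := hs0 k hk
    omega
  set M := sInf V with hMdef
  have hM : M ∈ V := Nat.sInf_mem hne
  have hmin : ∀ j : ℕ, 1 ≤ j → j < M → ∃ k, k < m ∧ s k = p - (j : ℤ) - 1 := by
    intro j h1 hj
    have hnm := Nat.notMem_of_lt_sInf hj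
    by_contra hc
    exact hnm ⟨h1, hc⟩
  have ha : ∀ i : ℕ, i ≤ M → aSeq m s t p i = ((p - i : ℤ) : WithBot ℤ) := by
    intro i hi
    apply aSeq_eq_of m s t hquad
    intro j h2 hji
    obtain ⟨k, hk, hsk⟩ := hmin (j - 1) (by omega) (by omega)
    exact ⟨k, hk, by omega⟩
  refine ⟨M, hM.1, hmin, hM.2, ha, ?_⟩
  intro hp0
  rw [lSeq, if_neg hp0]
  have hM1' : 1 ≤ M := hM.1
  have hMU : M ∈ {j : ℕ | 1 ≤ j ∧ dW m s t (aSeq m s t p (j - 1)) = dW m s t (aSeq m s t p j)} := by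
    refine ⟨hM.1, ?_⟩
    rw [ha (M - 1) (by omega), ha M le_rfl, dW_coe, dW_coe]
    have h1 : p - ((M - 1 : ℕ) : ℤ) = p - M + 1 := by omega
    rw [h1]
    rw [dvalue_eq_of_notMem m s t hquad (p - M + 1)
      (by rintro ⟨k, hk, hsk⟩; exact hM.2 ⟨k, hk, by omega⟩)]
    congr 1; ring
  refine le_antisymm (Nat.sInf_le hMU) (le_csInf ⟨M, hMU⟩ ?_)
  rintro j ⟨hj1, hjeq⟩
  by_contra hc
  push_neg at hc
  obtain ⟨k, hk, hsk⟩ := hmin j hj1 hc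
  rw [ha (j - 1) (by omega), ha j (by omega), dW_coe, dW_coe] at hjeq
  have h1 : p - ((j - 1 : ℕ) : ℤ) = p - j + 1 := by omega
  rw [h1] at hjeq
  rw [dvalue_eq_of_mem m s t hquad (p - j + 1) k hk (by omega)] at hjeq
  have h2 := dvalue_le m s t hquad (p - j)
  rw [← hjeq] at h2
  have := WithBot.coe_le_coe.mp h2
  omega

end QuadraticAux

theorem quadratic_case
    (n : ℤ) (m : ℕ) (s t : ℕ → ℤ)
    (hn : 0 ≤ n)
    (hsmono : ∀ i j : ℕ, i < j → j < m → s i < s j)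
    (htmono : ∀ i j : ℕ, i < j → j < m → t i < t j)
    (hs0 : ∀ j : ℕ, j < m → 0 ≤ s j)
    (htn : ∀ j : ℕ, j < m → t j ≤ n)
    (hlen : ∀ j : ℕ, j < m → s j + 2 ≤ t j)
    (hquad : ∀ j : ℕ, j < m → t j = s j + 2) :
    (∀ p q : ℤ, 0 ≤ q → q ≤ p → p ≤ n →
      ((∃ i : ℕ, i ≤ lSeq m s t p ∧ aSeq m s t p i = (q : WithBot ℤ)) ↔
        ∀ r : ℤ, q ≤ r → r ≤ p - 2 → ∃ j : ℕ, j < m ∧ s j = r) ∧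
      (∀ i : ℕ, i ≤ lSeq m s t p → aSeq m s t p i = (q : WithBot ℤ) → (i : ℤ) = p - q)) ∧
    (∀ p : ℤ, 0 ≤ p → p ≤ n → ∀ i : ℕ, i ≤ lSeq m s t p →
      aSeq m s t p i = ((p - (i : ℤ) : ℤ) : WithBot ℤ)) := by
  have hA : ∀ p : ℤ, 0 ≤ p → ∀ i : ℕ, i ≤ lSeq m s t p →
      aSeq m s t p i = ((p - (i : ℤ) : ℤ) : WithBot ℤ) := by
    intro p hp i hi
    by_cases hp0 : p = 0
    · subst hp0
      rw [lSeq, if_pos rfl] at hi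
      have hi0 : i = 0 := Nat.le_zero.mp hi
      subst hi0
      simp [aSeq_zero]
    · obtain ⟨M, hM1, hmin, hMnot, haM, hL⟩ := quadratic_key m s t hquad hs0 p hp
      rw [hL hp0] at hi
      exact haM i hi
  refine ⟨?_, fun p hp _ i hi => hA p hp i hi⟩
  intro p q hq hqp hpn
  have hp : 0 ≤ p := le_trans hq hqp
  constructor
  · constructor
    · rintro ⟨i, hi, hai⟩ r hr1 hr2
      rw [hA p hp i hi] at hai
      have hq' : p - (i : ℤ) = q := by exact_mod_cast hai
      have hp0 : p ≠ 0 := by omega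
      obtain ⟨M, hM1, hmin, hMnot, haM, hL⟩ := quadratic_key m s t hquad hs0 p hp
      rw [hL hp0] at hi
      obtain ⟨k, hk, hsk⟩ := hmin (p - r - 1).toNat (by omega) (by omega)
      exact ⟨k, hk, by omega⟩
    · intro h
      by_cases hp0 : p = 0
      · subst hp0
        have hq0 : q = 0 := by omega
        subst hq0
        exact ⟨0, le_of_eq (by rw [lSeq, if_pos rfl]), by simp [aSeq_zero]⟩
      · obtain ⟨M, hM1, hmin, hMnot, haM, hL⟩ := quadratic_key m s t hquad hs0 p hp
        have hiM : (p - q).toNat ≤ M := by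
          by_contra hc
          push_neg at hc
          exact hMnot (h (p - M - 1) (by omega) (by omega))
        refine ⟨(p - q).toNat, by rw [hL hp0]; exact hiM, ?_⟩
        rw [haM _ hiM]
        congr 1
        omega
  · intro i hi hai
    rw [hA p hp i hi] at hai
    have : p - (i : ℤ) = q := by exact_mod_cast hai
    omega
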